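/- Let E be a real inner product space, 𝒜 : E → ℝ a differentiable function, ε ≥ 0 and w ∈ ℝ real numbers, and P : ℝ → E → E a map such that P(τ, x) = 0 whenever τ ∉ [0, 1], and ‖P(τ, x)‖ ≤ ε for all τ ∈ ℝ and x ∈ E. Let u : ℝ → E be a differentiable curve with continuous derivative u' satisfying the perturbed negative gradient flow equation: for every τ ∈ ℝ and v ∈ E, D𝒜(u(τ))(v) = ⟨P(τ, u(τ)) − u'(τ), v⟩. Suppose u(τ) → p⁻ as τ → −∞, u(τ) → p⁺ as τ → +∞, and 𝒜(p⁻) − 𝒜(p⁺) ≤ w. Then τ ↦ ‖u'(τ)‖² is integrable on ℝ and ∫_ℝ ‖u'(τ)‖² dτ ≤ (4/3)·(w + ε²). -/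

import Mathlib

open Filter MeasureTheory

/-- Hilbert-space model of the a priori energy bound for the continuation (chain map)
equation: a negative gradient flow line of `𝒜` perturbed by a term `P` vanishing outside
`τ ∈ [0,1]` and bounded by `ε`, connecting limit points whose action difference is at most
`w`, has energy `∫ ‖u'‖²` at most `(4/3)(w + ε²)`. -/
theorem energy_bound_perturbed_gradient_flow {E : Type*} [NormedAddCommGroup E]
    [InnerProductSpace ℝ E]
    (𝒜 : E → ℝ) (h𝒜 : Differentiable ℝ 𝒜)
    (ε w : ℝ) (hε : 0 ≤ ε)
    (P : ℝ → E → E)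
    (hP0 : ∀ τ : ℝ, τ ∉ Set.Icc (0 : ℝ) 1 → ∀ x : E, P τ x = 0)
    (hPb : ∀ τ : ℝ, ∀ x : E, ‖P τ x‖ ≤ ε)
    (u : ℝ → E) (hu : Differentiable ℝ u) (hu' : Continuous (deriv u))
    (hflow : ∀ τ : ℝ, ∀ v : E,
      fderiv ℝ 𝒜 (u τ) v = (inner ℝ (P τ (u τ) - deriv u τ) v : ℝ))
    (pminus pplus : E)
    (hminus : Tendsto u atBot (nhds pminus)) (hplus : Tendsto u atTop (nhds pplus))
    (hw : 𝒜 pminus - 𝒜 pplus ≤ w) :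
    Integrable (fun τ : ℝ => ‖deriv u τ‖ ^ 2) ∧
      (∫ τ : ℝ, ‖deriv u τ‖ ^ 2) ≤ (4 / 3) * (w + ε ^ 2) := by
  set q : ℝ → ℝ := fun τ => ‖deriv u τ‖ ^ 2 with hqdef
  have hqc : Continuous q := (hu'.norm.pow 2)
  have hqnn : ∀ τ, 0 ≤ q τ := fun τ => sq_nonneg _
  set g : ℝ → ℝ := fun τ => 𝒜 (u τ) with hgdef
  have hg : ∀ τ : ℝ, HasDerivAt g ((inner ℝ (P τ (u τ) - deriv u τ) (deriv u τ) : ℝ)) τ := by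
    intro τ
    have h1 := (h𝒜 (u τ)).hasFDerivAt.comp_hasDerivAt τ (hu τ).hasDerivAt
    rw [hflow τ (deriv u τ)] at h1
    exact h1
  -- the function `g` has derivative `-(q τ)` outside `[0,1]`
  have hgout : ∀ τ : ℝ, τ ∉ Set.Icc (0 : ℝ) 1 → HasDerivAt g (-(q τ)) τ := by
    intro τ hτ
    have h1 := hg τ
    rw [hP0 τ hτ] at h1
    simpa [hqdef, zero_sub, inner_neg_left, real_inner_self_eq_norm_sq] using h1
  set Q : ℝ → ℝ := fun τ => ∫ t in (0:ℝ)..τ, q t with hQdef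
  have hQint : ∀ a b : ℝ, IntervalIntegrable q volume a b := fun a b =>
    hqc.intervalIntegrable a b
  have hQ : ∀ τ : ℝ, HasDerivAt Q (q τ) τ := fun τ =>
    intervalIntegral.integral_hasDerivAt_right (hQint 0 τ)
      (hqc.stronglyMeasurableAtFilter _ _) hqc.continuousAt
  have hQ0 : Q 0 = 0 := intervalIntegral.integral_same
  have hQmono : Monotone Q :=
    monotone_of_deriv_nonneg (fun τ => (hQ τ).differentiableAt)
      (fun τ => by rw [(hQ τ).deriv]; exact hqnn τ)
  -- `F = g + Q` is constant on `(-∞,0]` and on `[1,∞)`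
  set F : ℝ → ℝ := fun τ => g τ + Q τ with hFdef
  have hFdiff : Differentiable ℝ F := fun τ =>
    (((hg τ).add (hQ τ)).differentiableAt)
  have hFderiv0 : ∀ τ : ℝ, τ ∉ Set.Icc (0 : ℝ) 1 → HasDerivAt F 0 τ := by
    intro τ hτ
    have := (hgout τ hτ).add (hQ τ)
    rw [neg_add_cancel] at this
    exact this
  have hconst : ∀ (s : Set ℝ), Convex ℝ s → (∀ x ∈ interior s, x ∉ Set.Icc (0:ℝ) 1) →
      ∀ x ∈ s, ∀ y ∈ s, x ≤ y → F x = F y := by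
    intro s hs hint x hx y hy hxy
    have hd0 : ∀ x ∈ interior s, deriv F x = 0 := fun x hx =>
      (hFderiv0 x (hint x hx)).deriv
    have hm : MonotoneOn F s :=
      monotoneOn_of_deriv_nonneg hs hFdiff.continuous.continuousOn
        hFdiff.differentiableOn (fun x hx => (hd0 x hx).ge)
    have ha : AntitoneOn F s :=
      antitoneOn_of_deriv_nonpos hs hFdiff.continuous.continuousOn
        hFdiff.differentiableOn (fun x hx => (hd0 x hx).le)
    exact le_antisymm (hm hx hy hxy) (ha hx hy hxy)
  have keyA : ∀ a : ℝ, a ≤ 0 → F a = F 0 := by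
    intro a ha
    refine hconst (Set.Iic 0) (convex_Iic 0) ?_ a ha 0 (Set.mem_Iic.2 le_rfl) ha
    intro x hx
    rw [interior_Iic] at hx
    intro hmem
    exact absurd hmem.1 (not_le.2 hx)
  have keyB : ∀ b : ℝ, 1 ≤ b → F 1 = F b := by
    intro b hb
    refine hconst (Set.Ici 1) (convex_Ici 1) ?_ 1 (Set.mem_Ici.2 le_rfl) b hb hb
    intro x hx
    rw [interior_Ici] at hx
    intro hmem
    exact absurd hmem.2 (not_le.2 hx)
  -- `g` is antitone on `(-∞,0]` and on `[1,∞)`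
  have hganti : ∀ (s : Set ℝ), Convex ℝ s → (∀ x ∈ interior s, x ∉ Set.Icc (0:ℝ) 1) →
      AntitoneOn g s := by
    intro s hs hint
    refine antitoneOn_of_deriv_nonpos hs ?_ ?_ ?_
    · exact (Differentiable.continuous (fun τ => (hg τ).differentiableAt)).continuousOn
    · exact fun x _ => ((hg x).differentiableAt).differentiableWithinAt
    · intro x hx
      rw [(hgout x (hint x hx)).deriv]
      simpa using hqnn x
  have hganti1 : AntitoneOn g (Set.Iic 0) := by
    refine hganti _ (convex_Iic 0) ?_
    intro x hx
    rw [interior_Iic] at hx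
    exact fun hmem => absurd hmem.1 (not_le.2 hx)
  have hganti2 : AntitoneOn g (Set.Ici 1) := by
    refine hganti _ (convex_Ici 1) ?_
    intro x hx
    rw [interior_Ici] at hx
    exact fun hmem => absurd hmem.2 (not_le.2 hx)
  -- limits of `g`
  have hglimm : Tendsto g atBot (nhds (𝒜 pminus)) :=
    ((h𝒜 pminus).continuousAt.tendsto).comp hminus
  have hglimp : Tendsto g atTop (nhds (𝒜 pplus)) :=
    ((h𝒜 pplus).continuousAt.tendsto).comp hplus
  have hga : ∀ a : ℝ, a ≤ 0 → g a ≤ 𝒜 pminus := by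
    intro a ha
    refine ge_of_tendsto hglimm ?_
    filter_upwards [eventually_le_atBot a] with τ hτ
    exact hganti1 (Set.mem_Iic.2 (hτ.trans ha)) (Set.mem_Iic.2 ha) hτ
  have hgb : ∀ b : ℝ, 1 ≤ b → 𝒜 pplus ≤ g b := by
    intro b hb
    refine le_of_tendsto hglimp ?_
    filter_upwards [eventually_ge_atTop b] with τ hτ
    exact hganti2 (Set.mem_Ici.2 hb) (Set.mem_Ici.2 (hb.trans hτ)) hτ
  -- the key pointwise inequality
  have hkey : ∀ τ : ℝ, (inner ℝ (P τ (u τ) - deriv u τ) (deriv u τ) : ℝ)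
      ≤ ε ^ 2 - (3/4) * q τ := by
    intro τ
    have h1 : (inner ℝ (P τ (u τ)) (deriv u τ) : ℝ) ≤ ε * ‖deriv u τ‖ :=
      (real_inner_le_norm _ _).trans
        (mul_le_mul_of_nonneg_right (hPb τ _) (norm_nonneg _))
    have h2 : (inner ℝ (P τ (u τ) - deriv u τ) (deriv u τ) : ℝ)
        = (inner ℝ (P τ (u τ)) (deriv u τ) : ℝ) - ‖deriv u τ‖ ^ 2 := by
      rw [inner_sub_left, real_inner_self_eq_norm_sq]
    have hq' : q τ = ‖deriv u τ‖ ^ 2 := rfl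
    nlinarith [sq_nonneg (ε - ‖deriv u τ‖ / 2)]
  -- `F2` is antitone on `[0,1]`
  set F2 : ℝ → ℝ := fun τ => g τ + (3/4) * Q τ - ε ^ 2 * τ with hF2def
  have hF2d : ∀ τ : ℝ, HasDerivAt F2
      ((inner ℝ (P τ (u τ) - deriv u τ) (deriv u τ) : ℝ) + (3/4) * q τ - ε ^ 2 * 1) τ :=
    fun τ => ((hg τ).add ((hQ τ).const_mul _)).sub ((hasDerivAt_id τ).const_mul (ε ^ 2))
  have hF2diff : Differentiable ℝ F2 := fun τ => (hF2d τ).differentiableAt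
  have hF2anti : AntitoneOn F2 (Set.Icc 0 1) := by
    refine antitoneOn_of_deriv_nonpos (convex_Icc 0 1) hF2diff.continuous.continuousOn
      hF2diff.differentiableOn ?_
    intro x _
    rw [(hF2d x).deriv]
    have := hkey x
    linarith
  have e3 : g 1 + (3/4) * Q 1 - ε ^ 2 ≤ g 0 := by
    have := hF2anti (Set.mem_Icc.2 ⟨le_rfl, zero_le_one⟩)
      (Set.mem_Icc.2 ⟨zero_le_one, le_rfl⟩) zero_le_one
    simp only [hF2def, hQ0] at this
    linarith
  -- main interval bound
  have hbound : ∀ a : ℝ, a ≤ 0 → ∀ b : ℝ, 1 ≤ b →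
      (∫ τ in a..b, q τ) ≤ (4/3) * (w + ε ^ 2) := by
    intro a ha b hb
    have e1 : g a + Q a = g 0 + Q 0 := keyA a ha
    have e2 : g 1 + Q 1 = g b + Q b := keyB b hb
    have e4 : Q 1 ≤ Q b := hQmono hb
    have e5 : Q a ≤ Q 0 := hQmono ha
    have e6 := hga a ha
    have e7 := hgb b hb
    have heq : (∫ τ in a..b, q τ) = Q b - Q a :=
      (intervalIntegral.integral_interval_sub_left (hQint 0 b) (hQint 0 a)).symm
    rw [heq]
    linarith [hQ0]
  -- conclude
  have hA : Tendsto (fun n : ℕ => -(n : ℝ)) atTop atBot :=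
    tendsto_neg_atTop_atBot.comp tendsto_natCast_atTop_atTop
  have hB : Tendsto (fun n : ℕ => (n : ℝ) + 1) atTop atTop :=
    tendsto_atTop_add_const_right atTop 1 tendsto_natCast_atTop_atTop
  have hfi : ∀ n : ℕ, IntegrableOn q (Set.Ioc (-(n:ℝ)) ((n:ℝ) + 1)) volume :=
    fun n => hqc.integrableOn_Ioc
  have hbound' : ∀ n : ℕ, (∫ τ in (-(n:ℝ))..((n:ℝ)+1), ‖q τ‖) ≤ (4/3) * (w + ε ^ 2) := by
    intro n
    have : (∫ τ in (-(n:ℝ))..((n:ℝ)+1), ‖q τ‖) = ∫ τ in (-(n:ℝ))..((n:ℝ)+1), q τ :=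
      intervalIntegral.integral_congr fun x _ => Real.norm_of_nonneg (hqnn x)
    rw [this]
    exact hbound _ (by simp) _ (by linarith [Nat.cast_nonneg (α := ℝ) n])
  have hint : Integrable q :=
    integrable_of_intervalIntegral_norm_bounded ((4/3) * (w + ε ^ 2)) hfi hA hB
      (Eventually.of_forall hbound')
  refine ⟨hint, ?_⟩
  have htend : Tendsto (fun n : ℕ => ∫ τ in (-(n:ℝ))..((n:ℝ)+1), q τ) atTop
      (nhds (∫ τ, q τ)) := intervalIntegral_tendsto_integral hint hA hB
  refine le_of_tendsto htend (Eventually.of_forall fun n => ?_)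
  exact hbound _ (by simp) _ (by linarith [Nat.cast_nonneg (α := ℝ) n])
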